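/- Let n ∈ ℝ³ with ‖n‖ = 1 and let f : ℝ³ → ℝ³ be differentiable with Df(q)(n × q) = n × f(q) for all q ∈ ℝ³. If (q, λ, p_q, p_λ) : [0,T] → (ℝ³)⁴ is a C¹ solution of Hamilton's equations q̇ = -p_λ, λ̇ = -p_q, ṗ_q = -(Df(q))ᵀ λ, ṗ_λ = -f(q) - λ, then the quantity t ↦ ⟨n, q(t) × p_q(t) + λ(t) × p_λ(t)⟩ is constant on [0,T]. -/

import Mathlib

open scoped RealInnerProductSpace

noncomputable abbrev E3 := EuclideanSpace ℝ (Fin 3)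

noncomputable def crossL : E3 →ₗ[ℝ] E3 →ₗ[ℝ] E3 :=
  LinearMap.mk₂ ℝ (fun x y => WithLp.toLp 2 (crossProduct x y))
    (fun a b c => by ext i; simp [map_add, LinearMap.add_apply])
    (fun r a b => by ext i; simp [map_smul, LinearMap.smul_apply])
    (fun a b c => by ext i; simp [map_add])
    (fun r a b => by ext i; simp [map_smul])

noncomputable def crossCLM : E3 →L[ℝ] E3 →L[ℝ] E3 :=
  LinearMap.toContinuousLinearMap
    ((LinearMap.toContinuousLinearMap : (E3 →ₗ[ℝ] E3) ≃ₗ[ℝ] (E3 →L[ℝ] E3)).toLinearMap.comp crossL)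

lemma crossCLM_apply (x y : E3) : crossCLM x y = WithLp.toLp 2 (crossProduct x y) := rfl

lemma triple13 (a b c : E3) : ⟪a, WithLp.toLp 2 (crossProduct b c)⟫ = ⟪c, WithLp.toLp 2 (crossProduct a b)⟫ := by
  simp [PiLp.inner_apply, cross_apply, Fin.sum_univ_three]
  ring

lemma flip13 (a b c : E3) : ⟪a, WithLp.toLp 2 (crossProduct b c)⟫ = -⟪b, WithLp.toLp 2 (crossProduct a c)⟫ := by
  simp [PiLp.inner_apply, cross_apply, Fin.sum_univ_three]
  ring

lemma anti13 (a b c : E3) : ⟪a, WithLp.toLp 2 (crossProduct b c)⟫ = -⟪a, WithLp.toLp 2 (crossProduct c b)⟫ := by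
  simp [PiLp.inner_apply, cross_apply, Fin.sum_univ_three]
  ring

lemma self13 (a b : E3) : ⟪a, WithLp.toLp 2 (crossProduct b b)⟫ = 0 := by
  simp [PiLp.inner_apply, cross_apply, Fin.sum_univ_three]

lemma hasDerivAt_cross {u v : ℝ → E3} {u' v' : E3} {t : ℝ}
    (hu : HasDerivAt u u' t) (hv : HasDerivAt v v' t) :
    HasDerivAt (fun s => crossCLM (u s) (v s))
      (crossCLM u' (v t) + crossCLM (u t) v') t := by
  have h1 : HasDerivAt (fun s => crossCLM (u s)) (crossCLM u') t :=
    crossCLM.hasFDerivAt.comp_hasDerivAt t hu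
  exact h1.clm_apply hv

/-- For `f` infinitesimally equivariant under rotations about a unit vector
`n`, the quantity `⟨n, q × p_q + λ × p_λ⟩` is conserved along C¹ solutions of Hamilton's
equations `q̇ = -p_λ`, `λ̇ = -p_q`, `ṗ_q = -(Df(q))ᵀ λ`, `ṗ_λ = -f(q) - λ`. -/
theorem conserved_quantity_rotational_symmetry_hamiltonian
    (T : ℝ) (hT : 0 < T)
    (nv : EuclideanSpace ℝ (Fin 3)) (hn : ‖nv‖ = 1)
    (f : EuclideanSpace ℝ (Fin 3) → EuclideanSpace ℝ (Fin 3)) (hf : Differentiable ℝ f)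
    (hequiv : ∀ q : EuclideanSpace ℝ (Fin 3),
      fderiv ℝ f q (WithLp.toLp 2 (crossProduct nv q)) = crossProduct nv (f q))
    (q l pq pl : ℝ → EuclideanSpace ℝ (Fin 3))
    (hq : ContDiff ℝ 1 q) (hl : ContDiff ℝ 1 l)
    (hpq : ContDiff ℝ 1 pq) (hpl : ContDiff ℝ 1 pl)
    (hham : ∀ t ∈ Set.Icc (0 : ℝ) T,
      deriv q t = -pl t ∧
      deriv l t = -pq t ∧
      deriv pq t = -(fderiv ℝ f (q t)).adjoint (l t) ∧
      deriv pl t = -f (q t) - l t) :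
    ∀ t₁ ∈ Set.Icc (0 : ℝ) T, ∀ t₂ ∈ Set.Icc (0 : ℝ) T,
      @inner ℝ (EuclideanSpace ℝ (Fin 3)) _ nv
          (WithLp.toLp 2 (crossProduct (q t₁) (pq t₁) + crossProduct (l t₁) (pl t₁)))
        = @inner ℝ (EuclideanSpace ℝ (Fin 3)) _ nv
          (WithLp.toLp 2 (crossProduct (q t₂) (pq t₂) + crossProduct (l t₂) (pl t₂))) := by
  have hgoal : ∀ t : ℝ, (⟪nv, WithLp.toLp 2 (crossProduct (q t) (pq t) + crossProduct (l t) (pl t))⟫ : ℝ)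
      = ⟪nv, crossCLM (q t) (pq t) + crossCLM (l t) (pl t)⟫ := fun t => rfl
  set g : ℝ → ℝ := fun t =>
    ⟪nv, crossCLM (q t) (pq t) + crossCLM (l t) (pl t)⟫ with hg
  have hderiv : ∀ t ∈ Set.Icc (0 : ℝ) T, HasDerivAt g 0 t := by
    intro t ht
    obtain ⟨e1, e2, e3, e4⟩ := hham t ht
    have hq' : HasDerivAt q (-pl t) t := by
      have := (hq.differentiable one_ne_zero t).hasDerivAt
      rwa [e1] at this
    have hl' : HasDerivAt l (-pq t) t := by
      have := (hl.differentiable one_ne_zero t).hasDerivAt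
      rwa [e2] at this
    have hpq' : HasDerivAt pq (-(fderiv ℝ f (q t)).adjoint (l t)) t := by
      have := (hpq.differentiable one_ne_zero t).hasDerivAt
      rwa [e3] at this
    have hpl' : HasDerivAt pl (-f (q t) - l t) t := by
      have := (hpl.differentiable one_ne_zero t).hasDerivAt
      rwa [e4] at this
    have h1 := hasDerivAt_cross hq' hpq'
    have h2 := hasDerivAt_cross hl' hpl'
    have h3 := h1.add h2
    have h4 :=
      ((innerSL ℝ nv).hasFDerivAt.comp_hasDerivAt t h3 : HasDerivAt g _ t)
    have hzero :
        (innerSL ℝ nv)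
          ((crossCLM (-pl t) (pq t) + crossCLM (q t) (-(fderiv ℝ f (q t)).adjoint (l t))) +
           (crossCLM (-pq t) (pl t) + crossCLM (l t) (-f (q t) - l t))) = 0 := by
      have hkey : ⟪nv, WithLp.toLp 2 (crossProduct (q t) ((fderiv ℝ f (q t)).adjoint (l t)))⟫
          = ⟪l t, WithLp.toLp 2 (crossProduct nv (f (q t)))⟫ := by
        rw [triple13, ContinuousLinearMap.adjoint_inner_left, ← hequiv (q t), WithLp.toLp_ofLp]
      have hflip : ⟪nv, WithLp.toLp 2 (crossProduct (l t) (f (q t)))⟫ = -⟪l t, WithLp.toLp 2 (crossProduct nv (f (q t)))⟫ :=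
        flip13 nv (l t) (f (q t))
      have hanti : ⟪nv, WithLp.toLp 2 (crossProduct (pq t) (pl t))⟫ = -⟪nv, WithLp.toLp 2 (crossProduct (pl t) (pq t))⟫ := by
        rw [anti13]
      have hcc : ∀ a b : E3, crossCLM a b = WithLp.toLp 2 (crossProduct a b) := crossCLM_apply
      have hmapneg : ∀ a b : E3, (WithLp.toLp 2 (crossProduct (-a) b) : E3) = -WithLp.toLp 2 (crossProduct a b) := by
        intro a b; ext i; simp [map_neg]
      have hmapneg2 : ∀ a b : E3, (WithLp.toLp 2 (crossProduct a (WithLp.ofLp (-b))) : E3) = -WithLp.toLp 2 (crossProduct a b) := by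
        intro a b; ext i; simp [map_neg]
      have hmapsub : ∀ a b c : E3, (WithLp.toLp 2 (crossProduct a (WithLp.ofLp (b - c))) : E3)
          = WithLp.toLp 2 (crossProduct a b) - WithLp.toLp 2 (crossProduct a c) := by
        intro a b c; ext i; simp [map_sub]
      simp only [coe_innerSL_apply, innerSL_apply_apply, hcc, hmapneg, hmapneg2, hmapsub,
        inner_add_right, inner_neg_right, inner_sub_right, self13]
      rw [hkey]
      rw [hanti] at *
      rw [hflip]
      ring
    rw [hzero] at h4
    exact h4
  have hcont : ContinuousOn g (Set.Icc 0 T) := by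
    apply Continuous.continuousOn
    apply Continuous.inner continuous_const
    have c1 : Continuous fun t => crossCLM (q t) (pq t) :=
      (crossCLM.continuous.comp (hq.continuous)).clm_apply hpq.continuous
    have c2 : Continuous fun t => crossCLM (l t) (pl t) :=
      (crossCLM.continuous.comp (hl.continuous)).clm_apply hpl.continuous
    exact c1.add c2
  have hconst := constant_of_has_deriv_right_zero hcont
    (fun x hx => (hderiv x (Set.mem_Icc_of_Ico hx)).hasDerivWithinAt)
  intro t₁ ht₁ t₂ ht₂
  rw [hgoal t₁, hgoal t₂]
  calc g t₁ = g 0 := hconst t₁ ht₁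
    _ = g t₂ := (hconst t₂ ht₂).symm
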